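/- arXiv:2505.11938 — 2 statements merged into one kernel-verified Lean document; each statement's English description precedes it below -/
import Mathlib

section
/- Let $T_n$ and $W_m$ be finite-dimensional subspaces of a Hilbert space $V$ with $\beta(T_n, W_m) > 0$, set $\widetilde{T}_n = T_n \oplus (T_n^\perp \cap W_m)$, and let $f \in V$. If $u^* \in \widetilde{T}_n$ satisfies $P_{W_m} u^* = P_{W_m} f$, then $\|f - u^*\|_V \le \beta(T_n, W_m)^{-1} \inf_{\tilde v \in \widetilde{T}_n} \|f - \tilde v\|_V$. -/
open RealInnerProductSpace

/-- The stability constant `β(A,B) = inf_{v ∈ A, v ≠ 0} ‖P_B v‖ / ‖v‖`. -/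
noncomputable def beta {V : Type*} [NormedAddCommGroup V] [InnerProductSpace ℝ V]
    (A B : Submodule ℝ V) [Submodule.HasOrthogonalProjection B] : ℝ :=
  sInf {r : ℝ | ∃ v ∈ A, v ≠ 0 ∧ r = ‖(Submodule.orthogonalProjectionOnto B v : V)‖ / ‖v‖}


set_option maxHeartbeats 1000000 in
theorem stmt_11 {V : Type*} [NormedAddCommGroup V] [InnerProductSpace ℝ V] [CompleteSpace V]
    (Tn Wm : Submodule ℝ V) [FiniteDimensional ℝ Tn] [FiniteDimensional ℝ Wm]
    (hβpos : 0 < beta Tn Wm)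
    (f ustar : V) (hu : ustar ∈ Tn ⊔ (Tnᗮ ⊓ Wm))
    (hinterp : Submodule.orthogonalProjectionOnto Wm ustar = Submodule.orthogonalProjectionOnto Wm f) :
    ‖f - ustar‖ ≤ (beta Tn Wm)⁻¹ * sInf {r : ℝ | ∃ w ∈ Tn ⊔ (Tnᗮ ⊓ Wm), r = ‖f - w‖} := by
  classical
  set β := beta Tn Wm with hβdef
  set T : Submodule ℝ V := Tn ⊔ (Tnᗮ ⊓ Wm) with hTdef
  set e : V := f - ustar with hedef
  -- e ∈ Wmᗮ
  have hPe : Submodule.orthogonalProjectionOnto Wm e = 0 := by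
    rw [hedef, map_sub, hinterp, sub_self]
  have heW : e ∈ Wmᗮ := Submodule.orthogonalProjectionOnto_eq_zero_iff.mp hPe
  -- ‖P_Wm v‖ ≤ ‖v‖
  have hPle : ∀ v : V, ‖(Submodule.orthogonalProjectionOnto Wm v : V)‖ ≤ ‖v‖ := by
    intro v
    have h1 := (Submodule.orthogonalProjectionOnto Wm).le_opNorm v
    have h2 := Submodule.orthogonalProjectionOnto_norm_le (K := Wm)
    have : ‖Submodule.orthogonalProjectionOnto Wm v‖ ≤ 1 * ‖v‖ :=
      h1.trans (mul_le_mul_of_nonneg_right h2 (norm_nonneg _))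
    simpa using this
  -- basic facts about β
  have hSbdd : BddBelow {r : ℝ | ∃ v ∈ Tn, v ≠ 0 ∧ r = ‖(Submodule.orthogonalProjectionOnto Wm v : V)‖ / ‖v‖} := by
    refine ⟨0, ?_⟩
    rintro r ⟨v, -, -, rfl⟩
    exact div_nonneg (norm_nonneg _) (norm_nonneg _)
  have hβt : ∀ t : V, t ∈ Tn → β * ‖t‖ ≤ ‖(Submodule.orthogonalProjectionOnto Wm t : V)‖ := by
    intro t ht
    rcases eq_or_ne t 0 with rfl | htne
    · simp
    · have h := csInf_le hSbdd ⟨t, ht, htne, rfl⟩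
      have hpos : (0:ℝ) < ‖t‖ := norm_pos_iff.mpr htne
      calc β * ‖t‖ ≤ (‖(Submodule.orthogonalProjectionOnto Wm t : V)‖ / ‖t‖) * ‖t‖ :=
            mul_le_mul_of_nonneg_right h (norm_nonneg _)
        _ = ‖(Submodule.orthogonalProjectionOnto Wm t : V)‖ := by field_simp
  have hβ1 : β ≤ 1 := by
    by_contra h
    push_neg at h
    -- the defining set must be nonempty since β > 0
    rcases Set.eq_empty_or_nonempty
        {r : ℝ | ∃ v ∈ Tn, v ≠ 0 ∧ r = ‖(Submodule.orthogonalProjectionOnto Wm v : V)‖ / ‖v‖} with hS | hS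
    · rw [hβdef, beta, hS, Real.sInf_empty] at hβpos; exact lt_irrefl _ hβpos
    · obtain ⟨r, v, hv, hvne, rfl⟩ := hS
      have hr1 : ‖(Submodule.orthogonalProjectionOnto Wm v : V)‖ / ‖v‖ ≤ 1 :=
        div_le_one_of_le₀ (hPle v) (norm_nonneg _)
      have hle : β ≤ ‖(Submodule.orthogonalProjectionOnto Wm v : V)‖ / ‖v‖ :=
        csInf_le hSbdd ⟨v, hv, hvne, rfl⟩
      linarith
  -- finite dimensionality / projections onto T
  haveI : FiniteDimensional ℝ T := by
    rw [hTdef]; infer_instance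
  set p : V := (Submodule.orthogonalProjectionOnto T e : V) with hpdef
  set r : V := e - p with hrdef
  have hrT : r ∈ Tᗮ := Submodule.sub_starProjection_mem_orthogonal e
  have hpT : p ∈ T := Submodule.coe_mem _
  -- Step A : p ∈ Tn
  clear_value β T e p r
  have hpTn : p ∈ Tn := by
    have hpT' : p ∈ Tn ⊔ (Tnᗮ ⊓ Wm) := hTdef ▸ hpT
    obtain ⟨t, ht, z, hz, hpz⟩ := Submodule.mem_sup.mp hpT'
    have hzTn : z ∈ Tnᗮ := hz.1
    have hzWm : z ∈ Wm := hz.2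
    have hzT : z ∈ T := hTdef ▸ (le_sup_right (α := Submodule ℝ V) hz)
    have h1 : ⟪t, z⟫ = 0 := hzTn t ht
    have h2 : ⟪r, z⟫ = 0 := by
      have := hrT z hzT
      rwa [real_inner_comm] at this
    have h3 : ⟪e, z⟫ = 0 := by
      have := heW z hzWm
      rwa [real_inner_comm] at this
    have hz0 : z = 0 := by
      have hpz' : ⟪p, z⟫ = ‖z‖ ^ 2 := by
        rw [← hpz, inner_add_left, h1, zero_add, real_inner_self_eq_norm_sq]
      have hpz'' : ⟪p, z⟫ = 0 := by
        have : ⟪e - r, z⟫ = 0 := by rw [inner_sub_left, h2, h3, sub_zero]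
        simpa [hrdef] using this
      have : ‖z‖ ^ 2 = 0 := by rw [← hpz', hpz'']
      simpa using pow_eq_zero_iff (n := 2) (by norm_num) |>.mp this
    rw [← hpz, hz0, add_zero]; exact ht
  -- orthogonality and Pythagoras
  have hpr : ⟪p, r⟫ = 0 := hrT p hpT
  have hepr : e = p + r := by rw [hrdef]; abel
  have hE2 : ‖e‖ ^ 2 = ‖p‖ ^ 2 + ‖r‖ ^ 2 := by
    rw [hepr, norm_add_sq_real, hpr]; ring
  -- P_Wm r = - P_Wm p
  have hPrp : (Submodule.orthogonalProjectionOnto Wm r : V) = -(Submodule.orthogonalProjectionOnto Wm p : V) := by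
    have : Submodule.orthogonalProjectionOnto Wm r = Submodule.orthogonalProjectionOnto Wm e - Submodule.orthogonalProjectionOnto Wm p := by
      rw [hrdef, map_sub]
    rw [this, hPe, zero_sub]
    simp
  have hA : ‖(Submodule.orthogonalProjectionOnto Wm r : V)‖ = ‖(Submodule.orthogonalProjectionOnto Wm p : V)‖ := by
    rw [hPrp, norm_neg]
  -- β ‖p‖ ≤ ‖P_Wm r‖
  have hβp : β * ‖p‖ ≤ ‖(Submodule.orthogonalProjectionOnto Wm r : V)‖ := by
    rw [hA]; exact hβt p hpTn
  -- inner r e = ‖r‖²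
  have hrp : ⟪r, p⟫ = 0 := by rw [real_inner_comm]; exact hpr
  have hre : ⟪r, e⟫ = ‖r‖ ^ 2 := by
    rw [hepr, inner_add_right, hrp, zero_add, real_inner_self_eq_norm_sq]
  -- ⟪r, e⟫ = ⟪r - P_Wm r, e⟫
  have hre2 : ⟪r, e⟫ = ⟪r - (Submodule.orthogonalProjectionOnto Wm r : V), e⟫ := by
    have h0 : ⟪(Submodule.orthogonalProjectionOnto Wm r : V), e⟫ = 0 :=
      heW _ (Submodule.coe_mem (Submodule.orthogonalProjectionOnto Wm r))
    rw [inner_sub_left (𝕜 := ℝ), h0, sub_zero]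
  -- Pythagoras for r w.r.t. Wm
  have hR2 : ‖r - (Submodule.orthogonalProjectionOnto Wm r : V)‖ ^ 2
      = ‖r‖ ^ 2 - ‖(Submodule.orthogonalProjectionOnto Wm r : V)‖ ^ 2 := by
    have h := Submodule.norm_sq_eq_add_norm_sq_projection r Wm
    have h2 : ((Submodule.orthogonalProjectionOnto Wmᗮ r : V)) = r - (Submodule.orthogonalProjectionOnto Wm r : V) := by
      exact Submodule.starProjection_orthogonal_val r
    have h3 : ‖Submodule.orthogonalProjectionOnto Wm r‖ = ‖(Submodule.orthogonalProjectionOnto Wm r : V)‖ := rfl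
    have h4 : ‖Submodule.orthogonalProjectionOnto Wmᗮ r‖ = ‖(Submodule.orthogonalProjectionOnto Wmᗮ r : V)‖ := rfl
    rw [h3, h4, h2] at h
    linarith
  -- key quartic inequality
  have hquart : ‖r‖ ^ 4 ≤ (‖r‖ ^ 2 - (β * ‖p‖) ^ 2) * ‖e‖ ^ 2 := by
    have hC : |⟪r - (Submodule.orthogonalProjectionOnto Wm r : V), e⟫|
        ≤ ‖r - (Submodule.orthogonalProjectionOnto Wm r : V)‖ * ‖e‖ := abs_real_inner_le_norm _ _
    have h1 : ‖r‖ ^ 4 = (⟪r - (Submodule.orthogonalProjectionOnto Wm r : V), e⟫) ^ 2 := by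
      rw [← hre2, hre]; ring
    have h2 : (⟪r - (Submodule.orthogonalProjectionOnto Wm r : V), e⟫) ^ 2
        ≤ (‖r - (Submodule.orthogonalProjectionOnto Wm r : V)‖ * ‖e‖) ^ 2 := by
      rw [← sq_abs]
      exact pow_le_pow_left₀ (abs_nonneg _) hC 2
    have h3 : (‖r - (Submodule.orthogonalProjectionOnto Wm r : V)‖ * ‖e‖) ^ 2
        = (‖r‖ ^ 2 - ‖(Submodule.orthogonalProjectionOnto Wm r : V)‖ ^ 2) * ‖e‖ ^ 2 := by
      rw [mul_pow, hR2]
    have h4 : (β * ‖p‖) ^ 2 ≤ ‖(Submodule.orthogonalProjectionOnto Wm r : V)‖ ^ 2 :=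
      pow_le_pow_left₀ (mul_nonneg hβpos.le (norm_nonneg _)) hβp 2
    nlinarith [norm_nonneg e, sq_nonneg (‖e‖)]
  -- conclude β‖e‖ ≤ ‖r‖
  have hkey : β * ‖e‖ ≤ ‖r‖ := by
    rcases eq_or_ne (‖p‖) 0 with hp0 | hp0
    · -- p = 0, so r = e
      have : ‖e‖ ^ 2 = ‖r‖ ^ 2 := by rw [hE2, hp0]; ring
      have hER : ‖e‖ = ‖r‖ := by
        nlinarith [norm_nonneg e, norm_nonneg r]
      calc β * ‖e‖ ≤ 1 * ‖e‖ := mul_le_mul_of_nonneg_right hβ1 (norm_nonneg _)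
        _ = ‖r‖ := by rw [one_mul, hER]
    · have hppos : 0 < ‖p‖ := lt_of_le_of_ne (norm_nonneg _) (Ne.symm hp0)
      -- β²‖e‖² ≤ ‖r‖²
      have e1 : ‖r‖ ^ 2 * ‖e‖ ^ 2 = ‖r‖ ^ 2 * ‖p‖ ^ 2 + ‖r‖ ^ 4 := by
        rw [hE2]; ring
      have h6 : (β * ‖e‖) ^ 2 * ‖p‖ ^ 2 ≤ ‖r‖ ^ 2 * ‖p‖ ^ 2 := by
        nlinarith [hquart, e1]
      have hsq : (β * ‖e‖) ^ 2 ≤ ‖r‖ ^ 2 :=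
        (mul_le_mul_iff_left₀ (by positivity : (0:ℝ) < ‖p‖ ^ 2)).mp h6
      nlinarith [mul_nonneg hβpos.le (norm_nonneg e), norm_nonneg r]
  -- for any w ∈ T : ‖r‖ ≤ ‖f - w‖
  have hfin : ∀ w ∈ T, β * ‖e‖ ≤ ‖f - w‖ := by
    intro w hw
    have hT1 : (f - w) - r ∈ T := by
      have h1 : (f - w) - r = p + (ustar - w) := by
        rw [hrdef, hedef]; abel
      rw [h1]
      exact T.add_mem hpT (T.sub_mem hu hw)
    have hip : ⟪(f - w) - r, r⟫ = 0 := hrT _ hT1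
    have hsq : ‖f - w‖ ^ 2 = ‖(f - w) - r‖ ^ 2 + ‖r‖ ^ 2 := by
      have h := norm_add_sq_real ((f - w) - r) r
      have h2 : (f - w) - r + r = f - w := by abel
      rw [h2, hip] at h
      linarith
    have hRle : ‖r‖ ≤ ‖f - w‖ := by
      nlinarith [norm_nonneg ((f-w) - r), norm_nonneg (f - w), norm_nonneg r]
    exact hkey.trans hRle
  -- final: pass to the infimum
  have hne : {s : ℝ | ∃ w ∈ T, s = ‖f - w‖}.Nonempty := ⟨‖f - ustar‖, ustar, hu, rfl⟩
  have hlow : β * ‖e‖ ≤ sInf {s : ℝ | ∃ w ∈ T, s = ‖f - w‖} := by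
    apply le_csInf hne
    rintro s ⟨w, hw, rfl⟩
    exact hfin w hw
  have : ‖e‖ ≤ β⁻¹ * sInf {s : ℝ | ∃ w ∈ T, s = ‖f - w‖} := by
    rw [← mul_le_mul_iff_right₀ hβpos]
    calc β * ‖e‖ ≤ sInf {s : ℝ | ∃ w ∈ T, s = ‖f - w‖} := hlow
      _ = β * (β⁻¹ * sInf {s : ℝ | ∃ w ∈ T, s = ‖f - w‖}) := by
          field_simp
  exact this
end

section
/- Let $V$ be a Hilbert space, $\widetilde{T} \subseteq V$ a closed subspace, $W \subseteq V$ a closed subspace, and $f, u^* \in V$ with $u^* \in \widetilde{T}$ and $f - u^* \in W^\perp$. If $\beta(W^\perp, \widetilde{T}^\perp) := \inf_{w \in W^\perp\setminus\{0\}} \|P_{\widetilde{T}^\perp} w\|/\|w\| > 0$, then $\|f - u^*\|_V \le \beta(W^\perp, \widetilde{T}^\perp)^{-1} \|f - P_{\widetilde{T}} f\|_V$. -/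
theorem stmt_19 {V : Type*} [NormedAddCommGroup V] [InnerProductSpace ℝ V] [CompleteSpace V]
    (Tt W : Submodule ℝ V) [CompleteSpace Tt] [CompleteSpace W]
    (f ustar : V) (hu : ustar ∈ Tt) (horth : f - ustar ∈ Wᗮ)
    (hβpos : 0 < beta Wᗮ Ttᗮ) :
    ‖f - ustar‖ ≤ (beta Wᗮ Ttᗮ)⁻¹ * ‖f - (Submodule.orthogonalProjectionOnto Tt f : V)‖ := by
  by_cases he : f - ustar = 0
  · rw [he, norm_zero]
    positivity
  -- β ≤ ‖P_{Ttᗮ}(f - ustar)‖ / ‖f - ustar‖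
  have hmem : (‖(Submodule.orthogonalProjectionOnto Ttᗮ (f - ustar) : V)‖ / ‖f - ustar‖) ∈
      {r : ℝ | ∃ v ∈ Wᗮ, v ≠ 0 ∧ r = ‖(Submodule.orthogonalProjectionOnto Ttᗮ v : V)‖ / ‖v‖} :=
    ⟨f - ustar, horth, he, rfl⟩
  have hbdd : BddBelow {r : ℝ | ∃ v ∈ Wᗮ, v ≠ 0 ∧ r = ‖(Submodule.orthogonalProjectionOnto Ttᗮ v : V)‖ / ‖v‖} := by
    refine ⟨0, fun r hr => ?_⟩
    obtain ⟨v, _, _, rfl⟩ := hr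
    positivity
  have hle : beta Wᗮ Ttᗮ ≤ ‖(Submodule.orthogonalProjectionOnto Ttᗮ (f - ustar) : V)‖ / ‖f - ustar‖ :=
    csInf_le hbdd hmem
  -- P_{Ttᗮ}(f - ustar) = P_{Ttᗮ} f = f - P_{Tt} f
  have hproj : (Submodule.orthogonalProjectionOnto Ttᗮ (f - ustar) : V) =
      f - (Submodule.orthogonalProjectionOnto Tt f : V) := by
    rw [map_sub, Submodule.orthogonalProjectionOnto_orthogonal_apply_eq_zero hu]
    push_cast
    rw [sub_zero]
    exact eq_sub_of_add_eq' (Tt.starProjection_add_starProjection_orthogonal f)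
  rw [hproj] at hle
  have hnorm : 0 < ‖f - ustar‖ := norm_pos_iff.mpr he
  calc ‖f - ustar‖ = (beta Wᗮ Ttᗮ)⁻¹ * (beta Wᗮ Ttᗮ * ‖f - ustar‖) := by
        field_simp
    _ ≤ (beta Wᗮ Ttᗮ)⁻¹ * ‖f - (Submodule.orthogonalProjectionOnto Tt f : V)‖ := by
        exact mul_le_mul_of_nonneg_left ((le_div_iff₀ hnorm).mp hle) (inv_nonneg.mpr hβpos.le)
end
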